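/- Let s : ℝ → ℝ ∪ {∞} be proper, convex and lower semicontinuous, let γ, κ > 0 with γκ² < 1, and let t ∈ [0,1). If |prox_s(x) − prox_s(y)| ≤ (γκ²t/(1 − t(1 − γκ²)))·|x − y| for all x, y ∈ ℝ, then |prox_{γ·s(κ·)}(x) − prox_{γ·s(κ·)}(y)| ≤ t·|x − y| for all x, y ∈ ℝ, where γ·s(κ·) denotes the function u ↦ γ·s(κu). -/

import Mathlib

noncomputable section

/-- `p` is the (unique) proximal point at `x` of the extended-real-valued functional `s`. -/
def IsProxPtEReal (s : ℝ → EReal) (x p : ℝ) : Prop :=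
  (∀ y : ℝ, (((x - p) ^ 2 / 2 : ℝ) : EReal) + s p ≤ (((x - y) ^ 2 / 2 : ℝ) : EReal) + s y) ∧
  ∀ q : ℝ, (∀ y : ℝ, (((x - q) ^ 2 / 2 : ℝ) : EReal) + s q ≤
    (((x - y) ^ 2 / 2 : ℝ) : EReal) + s y) → q = p

/-- `s : ℝ → ℝ ∪ {∞}` is proper (finite somewhere, never `-∞`). -/
def ERealProper (s : ℝ → EReal) : Prop := (∃ x, s x ≠ ⊤) ∧ ∀ x, s x ≠ ⊥

/-- Convexity for extended-real-valued functions on `ℝ`. -/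
def ERealConvexOn (s : ℝ → EReal) : Prop :=
  ∀ x y : ℝ, ∀ a b : ℝ, 0 ≤ a → 0 ≤ b → a + b = 1 →
    s (a * x + b * y) ≤ (a : EReal) * s x + (b : EReal) * s y

/-- Auxiliary limit lemma: if `b ≤ c + a * d` for all small positive `a`, then `b ≤ c`. -/
lemma aux_limit15 (b c d : ℝ) (hd : 0 ≤ d)
    (h : ∀ a : ℝ, 0 < a → a < 1 → b ≤ c + a * d) : b ≤ c := by
  by_contra hcon
  push_neg at hcon
  have hbc : 0 < b - c := sub_pos.mpr hcon
  set a : ℝ := min (1/2) ((b - c) / (2 * (d + 1))) with ha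
  have hden : (0:ℝ) < 2 * (d + 1) := by linarith
  have ha0 : 0 < a := lt_min (by norm_num) (by positivity)
  have ha1 : a < 1 := lt_of_le_of_lt (min_le_left _ _) (by norm_num)
  have hstep := h a ha0 ha1
  have had : a * d < b - c := by
    calc a * d ≤ (b - c) / (2 * (d + 1)) * d :=
          mul_le_mul_of_nonneg_right (min_le_right _ _) hd
      _ < b - c := by
          rw [div_mul_eq_mul_div, div_lt_iff₀ hden]
          nlinarith
  linarith

/-- If `prox_s` is Lipschitz with constant `γκ²t/(1 − t(1 − γκ²))`, then
`prox_{γ·s(κ·)}` is Lipschitz with constant `t`. -/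
theorem statement15 (s : ℝ → EReal) (hproper : ERealProper s)
    (hconv : ERealConvexOn s) (hlsc : LowerSemicontinuous s)
    (γ κ : ℝ) (hγ : 0 < γ) (hκ : 0 < κ) (hγκ : γ * κ ^ 2 < 1)
    (t : ℝ) (ht0 : 0 ≤ t) (ht1 : t < 1)
    (p q : ℝ → ℝ)
    (hp : ∀ x, IsProxPtEReal s x (p x))
    (hq : ∀ x, IsProxPtEReal (fun u => (γ : EReal) * s (κ * u)) x (q x))
    (hlip : ∀ x y : ℝ, |p x - p y| ≤ γ * κ ^ 2 * t / (1 - t * (1 - γ * κ ^ 2)) * |x - y|) :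
    ∀ x y : ℝ, |q x - q y| ≤ t * |x - y| := by
  obtain ⟨x₀, hx₀⟩ := hproper.1
  have hbot := hproper.2
  have hl0 : (0:ℝ) < γ * κ ^ 2 := by positivity
  obtain ⟨S₀, hS₀⟩ : ∃ r : ℝ, s x₀ = (r : EReal) :=
    ⟨(s x₀).toReal, (EReal.coe_toReal hx₀ (hbot x₀)).symm⟩
  -- s is finite at κ * q x
  have hfinq : ∀ x, ∃ r : ℝ, s (κ * q x) = (r : EReal) := by
    intro x
    have h := (hq x).1 (x₀ / κ)
    simp only at h
    rw [mul_div_cancel₀ _ hκ.ne', hS₀] at h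
    have hne : s (κ * q x) ≠ ⊤ := by
      intro htop
      rw [htop, EReal.mul_top_of_pos (by exact_mod_cast hγ),
        EReal.add_top_of_ne_bot (EReal.coe_ne_bot _)] at h
      rw [← EReal.coe_mul, ← EReal.coe_add] at h
      exact (EReal.coe_lt_top _).not_ge h
    exact ⟨(s (κ * q x)).toReal, (EReal.coe_toReal hne (hbot _)).symm⟩
  -- s is finite at p x
  have hfinp : ∀ x, ∃ r : ℝ, s (p x) = (r : EReal) := by
    intro x
    have h := (hp x).1 x₀
    rw [hS₀] at h
    have hne : s (p x) ≠ ⊤ := by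
      intro htop
      rw [htop, EReal.add_top_of_ne_bot (EReal.coe_ne_bot _)] at h
      rw [← EReal.coe_add] at h
      exact (EReal.coe_lt_top _).not_ge h
    exact ⟨(s (p x)).toReal, (EReal.coe_toReal hne (hbot _)).symm⟩
  -- subgradient inequality at κ * q x
  have hsubq : ∀ x w Sv Sw : ℝ, s (κ * q x) = (Sv : EReal) → s w = (Sw : EReal) →
      (w - κ * q x) * (κ * x - κ * q x) ≤ γ * κ ^ 2 * (Sw - Sv) := by
    intro x w Sv Sw hSv hSw
    refine aux_limit15 _ _ ((w - κ * q x) ^ 2 / 2) (by positivity) ?_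
    intro a ha0 ha1
    set ya : ℝ := q x + a * (w / κ - q x) with hya
    have hky : κ * ya = (1 - a) * (κ * q x) + a * w := by
      rw [hya]; field_simp; ring
    have hc := hconv (κ * q x) w (1 - a) a (by linarith) ha0.le (by ring)
    rw [hSv, hSw, ← EReal.coe_mul, ← EReal.coe_mul, ← EReal.coe_add] at hc
    rw [← hky] at hc
    have hne : s (κ * ya) ≠ ⊤ := fun htop => by
      rw [htop] at hc; exact (EReal.coe_lt_top _).not_ge hc
    obtain ⟨Sa, hSa⟩ : ∃ r : ℝ, s (κ * ya) = (r : EReal) :=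
      ⟨(s (κ * ya)).toReal, (EReal.coe_toReal hne (hbot _)).symm⟩
    rw [hSa, EReal.coe_le_coe_iff] at hc
    have h := (hq x).1 ya
    simp only at h
    rw [hSv, hSa, ← EReal.coe_mul, ← EReal.coe_mul, ← EReal.coe_add, ← EReal.coe_add,
      EReal.coe_le_coe_iff] at h
    have e2 : (x - ya) * κ = (x - q x) * κ - a * (w - κ * q x) := by
      rw [hya]; field_simp; ring
    clear_value ya
    have e3 : (x - ya) ^ 2 * κ ^ 2 = ((x - q x) * κ - a * (w - κ * q x)) ^ 2 := by
      rw [← e2]; ring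
    have h2 : ((x - q x) ^ 2 / 2 + γ * Sv) * κ ^ 2 ≤ ((x - ya) ^ 2 / 2 + γ * Sa) * κ ^ 2 :=
      mul_le_mul_of_nonneg_right h (by positivity)
    have hc2 : γ * κ ^ 2 * Sa ≤ γ * κ ^ 2 * ((1 - a) * Sv + a * Sw) :=
      mul_le_mul_of_nonneg_left hc (by positivity)
    have key : a * ((w - κ * q x) * (κ * x - κ * q x)) ≤
        a * (γ * κ ^ 2 * (Sw - Sv) + a * ((w - κ * q x) ^ 2 / 2)) := by
      linarith [h2, e3, hc2]
    exact le_of_mul_le_mul_left key ha0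
  -- subgradient inequality at p x
  have hsubp : ∀ x w Sv Sw : ℝ, s (p x) = (Sv : EReal) → s w = (Sw : EReal) →
      (w - p x) * (x - p x) ≤ Sw - Sv := by
    intro x w Sv Sw hSv hSw
    refine aux_limit15 _ _ ((w - p x) ^ 2 / 2) (by positivity) ?_
    intro a ha0 ha1
    set ya : ℝ := p x + a * (w - p x) with hya
    have hky : ya = (1 - a) * p x + a * w := by rw [hya]; ring
    have hc := hconv (p x) w (1 - a) a (by linarith) ha0.le (by ring)
    rw [hSv, hSw, ← EReal.coe_mul, ← EReal.coe_mul, ← EReal.coe_add] at hc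
    rw [← hky] at hc
    have hne : s ya ≠ ⊤ := fun htop => by
      rw [htop] at hc; exact (EReal.coe_lt_top _).not_ge hc
    obtain ⟨Sa, hSa⟩ : ∃ r : ℝ, s ya = (r : EReal) :=
      ⟨(s ya).toReal, (EReal.coe_toReal hne (hbot _)).symm⟩
    rw [hSa, EReal.coe_le_coe_iff] at hc
    have h := (hp x).1 ya
    rw [hSv, hSa, ← EReal.coe_add, ← EReal.coe_add, EReal.coe_le_coe_iff] at h
    have e2 : x - ya = (x - p x) - a * (w - p x) := by rw [hya]; ring
    have key : a * ((w - p x) * (x - p x)) ≤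
        a * ((Sw - Sv) + a * ((w - p x) ^ 2 / 2)) := by
      nlinarith [h, e2, hc]
    exact le_of_mul_le_mul_left key ha0
  -- firm nonexpansiveness of p
  have hfirm : ∀ u1 u2 : ℝ, (p u1 - p u2) ^ 2 ≤ (p u1 - p u2) * (u1 - u2) := by
    intro u1 u2
    obtain ⟨S1, hS1⟩ := hfinp u1
    obtain ⟨S2, hS2⟩ := hfinp u2
    have k1 := hsubp u1 (p u2) S1 S2 hS1 hS2
    have k2 := hsubp u2 (p u1) S2 S1 hS2 hS1
    nlinarith [k1, k2]
  -- fixed point relation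
  have hfix : ∀ x : ℝ, p ((κ * x - (1 - γ * κ ^ 2) * (κ * q x)) / (γ * κ ^ 2)) = κ * q x := by
    intro x
    set u : ℝ := (κ * x - (1 - γ * κ ^ 2) * (κ * q x)) / (γ * κ ^ 2) with hu
    obtain ⟨Sv, hSv⟩ := hfinq x
    refine ((hp u).2 (κ * q x) ?_).symm
    intro w
    rcases eq_or_ne (s w) ⊤ with hw | hw
    · rw [hw, EReal.add_top_of_ne_bot (EReal.coe_ne_bot _)]
      exact le_top
    obtain ⟨Sw, hSw⟩ : ∃ r : ℝ, s w = (r : EReal) :=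
      ⟨(s w).toReal, (EReal.coe_toReal hw (hbot w)).symm⟩
    rw [hSv, hSw, ← EReal.coe_add, ← EReal.coe_add, EReal.coe_le_coe_iff]
    have hsub := hsubq x w Sv Sw hSv hSw
    have h4 : γ * κ ^ 2 * (u - κ * q x) = κ * x - κ * q x := by
      rw [hu]; field_simp; ring
    have h5 : (w - κ * q x) * (γ * κ ^ 2 * (u - κ * q x)) ≤ γ * κ ^ 2 * (Sw - Sv) := by
      rw [h4]; exact hsub
    have key : γ * κ ^ 2 * ((u - κ * q x) ^ 2 / 2 + Sv) ≤
        γ * κ ^ 2 * ((u - w) ^ 2 / 2 + Sw) := by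
      nlinarith [h5, mul_nonneg hl0.le (sq_nonneg (w - κ * q x))]
    exact le_of_mul_le_mul_left key hl0
  -- one-sided Lipschitz estimate
  have main : ∀ x y : ℝ, q x - q y ≤ t * |x - y| := by
    intro x y
    rcases le_or_gt (q x - q y) 0 with hd | hd
    · have : 0 ≤ t * |x - y| := by positivity
      linarith
    set u1 : ℝ := (κ * x - (1 - γ * κ ^ 2) * (κ * q x)) / (γ * κ ^ 2) with hu1
    set u2 : ℝ := (κ * y - (1 - γ * κ ^ 2) * (κ * q y)) / (γ * κ ^ 2) with hu2
    have hf1 : p u1 = κ * q x := hfix x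
    have hf2 : p u2 = κ * q y := hfix y
    have hfirm' := hfirm u1 u2
    rw [hf1, hf2] at hfirm'
    have hdu : γ * κ ^ 2 * (u1 - u2) = κ * (x - y) - (1 - γ * κ ^ 2) * κ * (q x - q y) := by
      rw [hu1, hu2]; field_simp; ring
    have hκd : 0 < κ * (q x - q y) := mul_pos hκ hd
    have hmono : κ * (q x - q y) ≤ u1 - u2 := by nlinarith [hfirm', hκd]
    have hde : q x - q y ≤ x - y := by nlinarith [hmono, hdu, hl0]
    have hex : 0 < x - y := lt_of_lt_of_le hd hde
    have hc : 0 < 1 - t * (1 - γ * κ ^ 2) := by nlinarith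
    have hl := hlip u1 u2
    rw [hf1, hf2] at hl
    have habs1 : |κ * q x - κ * q y| = κ * (q x - q y) := by
      rw [show κ * q x - κ * q y = κ * (q x - q y) by ring, abs_of_pos hκd]
    have habs2 : |u1 - u2| = u1 - u2 := abs_of_pos (lt_of_lt_of_le hκd hmono)
    rw [habs1, habs2, div_mul_eq_mul_div, le_div_iff₀ hc] at hl
    have h6 := mul_le_mul_of_nonneg_left hl hl0.le
    rw [show γ * κ ^ 2 * (γ * κ ^ 2 * t * (u1 - u2)) = γ * κ ^ 2 * t * (γ * κ ^ 2 * (u1 - u2))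
      by ring, hdu] at h6
    rw [abs_of_pos hex]
    nlinarith [h6, mul_pos hl0 hκ]
  intro x y
  rw [abs_sub_le_iff]
  exact ⟨main x y, by rw [abs_sub_comm]; exact main y x⟩
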